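/- Let F, H : [0,1]²→[0,1] be binary operations such that F(x, H(u,v)) = H(F(x,u), F(x,v)) for all x, u, v ∈ [0,1]. Then for all fuzzy truth values f, g, h and every z ∈ [0,1], (f ⊙_F (g ⊙_H h))(z) ≤ ((f ⊙_F g) ⊙_H (f ⊙_F h))(z). -/
import Mathlib


open Set

/-- The extension of a binary operation `G` on `[0,1]` to fuzzy truth values:
`(f ⊙_G g)(z) = sup { min (f x) (g y) | x, y ∈ [0,1], G x y = z }` (with `sSup ∅ = 0` in `ℝ`). -/
noncomputable def extOp (G : ℝ → ℝ → ℝ) (f g : ℝ → ℝ) : ℝ → ℝ := fun z =>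
  sSup {r : ℝ | ∃ x ∈ Icc (0:ℝ) 1, ∃ y ∈ Icc (0:ℝ) 1, G x y = z ∧ r = min (f x) (g y)}

/-- A fuzzy truth value: a map of `[0,1]` into itself. -/
def IsFTV (f : ℝ → ℝ) : Prop := ∀ x ∈ Icc (0:ℝ) 1, f x ∈ Icc (0:ℝ) 1

/-- Convexity of a fuzzy truth value. -/
def ConvexFTV (f : ℝ → ℝ) : Prop :=
  ∀ x y z : ℝ, 0 ≤ x → x ≤ y → y ≤ z → z ≤ 1 → min (f x) (f z) ≤ f y

/-- `F` maps `[0,1]²` into `[0,1]`. -/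
def MapsI (F : ℝ → ℝ → ℝ) : Prop :=
  ∀ x ∈ Icc (0:ℝ) 1, ∀ y ∈ Icc (0:ℝ) 1, F x y ∈ Icc (0:ℝ) 1

/-- `F` is nondecreasing in each variable on `[0,1]²`. -/
def MonoI (F : ℝ → ℝ → ℝ) : Prop :=
  ∀ x₁ x₂ y₁ y₂ : ℝ, x₁ ∈ Icc (0:ℝ) 1 → x₂ ∈ Icc (0:ℝ) 1 → y₁ ∈ Icc (0:ℝ) 1 →
    y₂ ∈ Icc (0:ℝ) 1 → x₁ ≤ x₂ → y₁ ≤ y₂ → F x₁ y₁ ≤ F x₂ y₂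

/-- `F` is continuous on `[0,1]²`. -/
def ContI (F : ℝ → ℝ → ℝ) : Prop :=
  ContinuousOn (fun p : ℝ × ℝ => F p.1 p.2) (Icc (0:ℝ) 1 ×ˢ Icc (0:ℝ) 1)

/-- `F` is commutative on `[0,1]²`. -/
def CommI (F : ℝ → ℝ → ℝ) : Prop := ∀ x ∈ Icc (0:ℝ) 1, ∀ y ∈ Icc (0:ℝ) 1, F x y = F y x

/-- `F` is associative on `[0,1]`. -/
def AssocI (F : ℝ → ℝ → ℝ) : Prop :=
  ∀ x ∈ Icc (0:ℝ) 1, ∀ y ∈ Icc (0:ℝ) 1, ∀ z ∈ Icc (0:ℝ) 1, F (F x y) z = F x (F y z)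

lemma extOp_set_bddAbove (G : ℝ → ℝ → ℝ) (f g : ℝ → ℝ) (hf : IsFTV f) (z : ℝ) :
    BddAbove {r : ℝ | ∃ x ∈ Icc (0:ℝ) 1, ∃ y ∈ Icc (0:ℝ) 1, G x y = z ∧ r = min (f x) (g y)} := by
  refine ⟨1, fun r hr => ?_⟩
  obtain ⟨x, hx, y, hy, _, rfl⟩ := hr
  exact le_trans (min_le_left _ _) (hf x hx).2

lemma extOp_nonneg (G : ℝ → ℝ → ℝ) (f g : ℝ → ℝ) (hf : IsFTV f) (hg : IsFTV g) (z : ℝ) :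
    0 ≤ extOp G f g z := by
  apply Real.sSup_nonneg
  rintro r ⟨x, hx, y, hy, _, rfl⟩
  exact le_min (hf x hx).1 (hg y hy).1

lemma le_extOp (G : ℝ → ℝ → ℝ) (f g : ℝ → ℝ) (hf : IsFTV f) {x y z : ℝ}
    (hx : x ∈ Icc (0:ℝ) 1) (hy : y ∈ Icc (0:ℝ) 1) (hz : G x y = z) :
    min (f x) (g y) ≤ extOp G f g z :=
  le_csSup (extOp_set_bddAbove G f g hf z) ⟨x, hx, y, hy, hz, rfl⟩

/-- If `F` distributes over `H` on `[0,1]`, then pointwise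
`f ⊙_F (g ⊙_H h) ≤ (f ⊙_F g) ⊙_H (f ⊙_F h)`. -/
theorem extOp_distrib_le (F H : ℝ → ℝ → ℝ)
    (hFmap : MapsI F) (hHmap : MapsI H)
    (hdist : ∀ x ∈ Icc (0:ℝ) 1, ∀ u ∈ Icc (0:ℝ) 1, ∀ v ∈ Icc (0:ℝ) 1,
      F x (H u v) = H (F x u) (F x v))
    (f g h : ℝ → ℝ) (hf : IsFTV f) (hg : IsFTV g) (hh : IsFTV h) :
    ∀ z ∈ Icc (0:ℝ) 1,
      extOp F f (extOp H g h) z ≤ extOp H (extOp F f g) (extOp F f h) z := by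
  intro z hz
  have hRHS0 : 0 ≤ extOp H (extOp F f g) (extOp F f h) z := by
    apply Real.sSup_nonneg
    rintro r ⟨a, ha, b, hb, _, rfl⟩
    exact le_min (extOp_nonneg F f g hf hg a) (extOp_nonneg F f h hf hh b)
  apply Real.sSup_le _ hRHS0
  rintro r ⟨x, hx, w, hw, hFxw, rfl⟩
  -- r = min (f x) (extOp H g h w)
  set S : Set ℝ := {s : ℝ | ∃ u ∈ Icc (0:ℝ) 1, ∃ v ∈ Icc (0:ℝ) 1, H u v = w ∧ s = min (g u) (h v)}
  have hSsup : extOp H g h w = sSup S := rfl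
  rcases le_or_gt (min (f x) (extOp H g h w)) 0 with h0 | h0
  · exact h0.trans hRHS0
  -- sSup S > 0 so S nonempty
  have hsup_pos : 0 < sSup S := lt_of_lt_of_le h0 (by rw [hSsup] at *; exact min_le_right _ _)
  have hSne : S.Nonempty := by
    by_contra hemp
    rw [Set.not_nonempty_iff_eq_empty] at hemp
    rw [hemp, Real.sSup_empty] at hsup_pos
    exact lt_irrefl 0 hsup_pos
  refine le_of_forall_pos_le_add (fun ε hε => ?_)
  obtain ⟨s, hsS, hs⟩ := exists_lt_of_lt_csSup hSne (show sSup S - ε < sSup S by linarith)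
  obtain ⟨u, hu, v, hv, hHuv, rfl⟩ := hsS
  -- key element of RHS set
  have hxu := hFmap x hx u hu
  have hxv := hFmap x hx v hv
  have hHab : H (F x u) (F x v) = z := by
    rw [← hdist x hx u hu v hv, hHuv, hFxw]
  have h1 : min (f x) (g u) ≤ extOp F f g (F x u) := le_extOp F f g hf hx hu rfl
  have h2 : min (f x) (h v) ≤ extOp F f h (F x v) := le_extOp F f h hf hx hv rfl
  have hmem : min (extOp F f g (F x u)) (extOp F f h (F x v)) ≤
      extOp H (extOp F f g) (extOp F f h) z := by
    apply le_csSup (extOp_set_bddAbove H (extOp F f g) (extOp F f h) ?_ z)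
      ⟨F x u, hxu, F x v, hxv, hHab, rfl⟩
    intro t ht
    refine ⟨extOp_nonneg F f g hf hg t, ?_⟩
    apply Real.sSup_le _ zero_le_one
    rintro r ⟨a, ha, b, hb, _, rfl⟩
    exact le_trans (min_le_left _ _) (hf a ha).2
  have hchain : min (f x) (min (g u) (h v)) ≤
      min (extOp F f g (F x u)) (extOp F f h (F x v)) := by
    refine le_min (le_trans ?_ h1) (le_trans ?_ h2)
    · exact le_min (min_le_left _ _)
        (le_trans (min_le_right _ _) (min_le_left _ _))
    · exact le_min (min_le_left _ _)
        (le_trans (min_le_right _ _) (min_le_right _ _))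
  have hkey : min (f x) (extOp H g h w) ≤ min (f x) (min (g u) (h v)) + ε := by
    rw [hSsup, ← min_add_add_right]
    exact min_le_min (by linarith) (by linarith)
  linarith [hchain, hmem]
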